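/- arXiv:1308.3728 — 5 statements merged into one kernel-verified Lean document; each statement's English description precedes it below -/
import Mathlib

section
/- Let D = (V,E) be an acyclic digraph. If Σ = (I-Λ)^{-T} Ω (I-Λ)^{-1} with Λ ∈ ℝ^E and Ω a diagonal matrix with positive diagonal entries, then Λ and Ω are uniquely determined by Σ: for each edge u → v, λ_{uv} equals the u-entry of the vector Σ_{v, pa(v)} (Σ_{pa(v), pa(v)})^{-1}, and ω_{vv} equals the Schur complement σ_{vv} − Σ_{v,pa(v)} (Σ_{pa(v),pa(v)})^{-1} Σ_{pa(v),v}. -/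
open Matrix BigOperators

def SupportedOn {V : Type} (E : V → V → Prop) (Λ : Matrix V V ℝ) : Prop :=
  ∀ u v, ¬ E u v → Λ u v = 0

def Acyclic {V : Type} (E : V → V → Prop) : Prop :=
  ∀ v, ¬ Relation.TransGen E v v

def cycAdj (p : ℕ) (i j : Fin p) : Prop :=
  (i.1 + 1) % p = j.1 ∨ (j.1 + 1) % p = i.1

structure Trek {V : Type} (E : V → V → Prop) (u v : V) where
  left : List V
  right : List V
  left_ne : left ≠ []
  right_ne : right ≠ []
  top_eq : left.head left_ne = right.head right_ne
  chain_left : List.Chain' E left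
  chain_right : List.Chain' E right
  last_left : left.getLast left_ne = u
  last_right : right.getLast right_ne = v

def Trek.top {V : Type} {E : V → V → Prop} {u v : V} (τ : Trek E u v) : V :=
  τ.left.head τ.left_ne

def edgeProd {V : Type} (Λ : Matrix V V ℝ) (l : List V) : ℝ :=
  ((l.zip l.tail).map fun p => Λ p.1 p.2).prod

def Trek.mono {V : Type} {E : V → V → Prop} {u v : V} (Λ Ω : Matrix V V ℝ)
    (τ : Trek E u v) : ℝ :=
  Ω τ.top τ.top * edgeProd Λ τ.left * edgeProd Λ τ.right

structure TrekSystem {V : Type} (E : V → V → Prop) {n : ℕ} (x y : Fin n → V) where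
  perm : Equiv.Perm (Fin n)
  trek : ∀ i, Trek E (x i) (y (perm i))

def TrekSystem.NoSided {V : Type} {E : V → V → Prop} {n : ℕ} {x y : Fin n → V}
    (S : TrekSystem E x y) : Prop :=
  ∀ i j, i ≠ j →
    (∀ a : V, ¬(a ∈ (S.trek i).left ∧ a ∈ (S.trek j).left)) ∧
    (∀ a : V, ¬(a ∈ (S.trek i).right ∧ a ∈ (S.trek j).right))

structure DWalk {U : Type} (E : U → U → Prop) (u v : U) where
  steps : List (Bool × U × U)
  ne : steps ≠ []
  first_eq : (steps.head ne).2.1 = u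
  last_eq : (steps.getLast ne).2.2 = v
  edge : ∀ s ∈ steps, (s.1 = true → E s.2.1 s.2.2) ∧ (s.1 = false → E s.2.2 s.2.1)
  chain : List.Chain' (fun s t : Bool × U × U => s.2.2 = t.2.1) steps

def stepPairOK {U : Type} (A : Set U) (s t : Bool × U × U) : Prop :=
  ((s.1 = true ∧ t.1 = false) → s.2.2 ∈ A) ∧ (¬(s.1 = true ∧ t.1 = false) → s.2.2 ∉ A)

def DWalk.DConn {U : Type} {E : U → U → Prop} {u v : U} (A : Set U)
    (w : DWalk E u v) : Prop :=
  List.Chain' (stepPairOK A) w.steps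

def topOf {U : Type} : List (Bool × U × U) → U → U
  | [], u => u
  | (d, a, _b) :: rest, _ => if d then a else topOf rest _b

def DWalk.top {U : Type} {E : U → U → Prop} {u v : U} (w : DWalk E u v) : U :=
  topOf w.steps u

def TopsA {U : Type} (E : U → U → Prop) (A : Set U) (u v : U) : Set U :=
  {t | ∃ w : DWalk E u v, w.DConn A ∧ w.top = t}

def anAvoid {U : Type} (E : U → U → Prop) (A : Set U) (x : U) : Set U :=
  {u | u ∉ A ∧ Relation.ReflTransGen (fun a b => E a b ∧ a ∉ A ∧ b ∉ A) u x}

def EA {U : Type} (E : U → U → Prop) (A : Set U) (n1 n2 : U) : Set (U × U) :=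
  {e | E e.1 e.2 ∧ e.1 ∈ TopsA E A n1 n2 ∧ e.2 ∈ anAvoid E A n1 ∧ e.2 ∉ TopsA E A n1 n2}

def IsProperPath {U : Type} (E : U → U → Prop) (A : Set U) (l : List U) : Prop :=
  l ≠ [] ∧ List.Chain' (fun a b => E a b ∧ a ∉ A) l

def DigraphCov {U : Type} [Fintype U] [DecidableEq U] (E : U → U → Prop) :
    Set (Matrix U U ℝ) :=
  {S | ∃ Λ Ω : Matrix U U ℝ, SupportedOn E Λ ∧ Ω.IsDiag ∧ (∀ u, 0 < Ω u u) ∧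
        S = ((1 - Λ)⁻¹)ᵀ * Ω * (1 - Λ)⁻¹}

def BSupported {V : Type} (B : SimpleGraph V) (Ω : Matrix V V ℝ) : Prop :=
  ∀ u v, u ≠ v → ¬ B.Adj u v → Ω u v = 0

def MixedCov {V : Type} [Fintype V] [DecidableEq V] (D : V → V → Prop)
    (B : SimpleGraph V) : Set (Matrix V V ℝ) :=
  {S | ∃ Λ Ω : Matrix V V ℝ, SupportedOn D Λ ∧ Ω.PosDef ∧ BSupported B Ω ∧
        S = ((1 - Λ)⁻¹)ᵀ * Ω * (1 - Λ)⁻¹}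

def StrictlyGaussianCausal {V : Type} [Fintype V] [DecidableEq V]
    (D : V → V → Prop) (B : SimpleGraph V) : Prop :=
  ∃ (U : Type) (iF : Fintype U) (iD : DecidableEq U) (ι : V ↪ U) (E : U → U → Prop),
    Acyclic E ∧
      (fun S : Matrix U U ℝ => S.submatrix ι ι) '' (@DigraphCov U iF iD E) = MixedCov D B

def Chordal {V : Type} (B : SimpleGraph V) : Prop :=
  ∀ n : ℕ, 4 ≤ n → ∀ f : ZMod n → V, Function.Injective f →
    (∀ i, B.Adj (f i) (f (i + 1))) →
    ∃ i j : ZMod n, j ≠ i + 1 ∧ i ≠ j + 1 ∧ i ≠ j ∧ B.Adj (f i) (f j)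

def ChainGraph {V : Type} (D : V → V → Prop) (B : SimpleGraph V) : Prop :=
  ¬ ∃ u v, D u v ∧ Relation.ReflTransGen (fun a b => D a b ∨ B.Adj a b) v u


section Aux
variable {V : Type} [Fintype V] [DecidableEq V]

lemma lam_pow_zero {E : V → V → Prop} (hE : Acyclic E) {Λ : Matrix V V ℝ}
    (hΛ : SupportedOn E Λ) : Λ ^ (Fintype.card V + 2) = 0 := by
  classical
  set b : V → ℕ := fun v => (Finset.univ.filter (fun u => Relation.TransGen E u v)).card with hbdef
  have hb : ∀ u v, E u v → b u < b v := by
    intro u v huv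
    apply Finset.card_lt_card
    constructor
    · intro x hx
      simp only [Finset.mem_filter, Finset.mem_univ, true_and] at hx ⊢
      exact hx.trans (Relation.TransGen.single huv)
    · intro hsub
      have hu : u ∈ Finset.univ.filter (fun x => Relation.TransGen E x v) := by
        simp [Relation.TransGen.single huv]
      have := hsub hu
      simp only [Finset.mem_filter, Finset.mem_univ, true_and] at this
      exact hE u this
  have key : ∀ k u v, (Λ ^ k) u v ≠ 0 → k ≤ b v + 1 := by
    intro k
    induction k with
    | zero => intro u v _; omega
    | succ n ih =>
      intro u v hne
      rw [pow_succ, Matrix.mul_apply] at hne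
      obtain ⟨w, -, hw⟩ := Finset.exists_ne_zero_of_sum_ne_zero hne
      have h1 : (Λ ^ n) u w ≠ 0 := fun h => hw (by simp [h])
      have h2 : Λ w v ≠ 0 := fun h => hw (by simp [h])
      have hEwv : E w v := by by_contra hc; exact h2 (hΛ w v hc)
      have := ih u w h1
      have := hb w v hEwv
      omega
  have hbv : ∀ v, b v ≤ Fintype.card V := fun v => Finset.card_filter_le _ _
  ext u v
  by_contra hne
  have := key _ u v hne
  have := hbv v
  omega

lemma lam_pow_entry {E : V → V → Prop} {Λ : Matrix V V ℝ}
    (hΛ : SupportedOn E Λ) : ∀ k u v, (Λ ^ k) u v ≠ 0 →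
      (k = 0 ∧ u = v) ∨ Relation.TransGen E u v := by
  intro k
  induction k with
  | zero =>
    intro u v h
    rw [pow_zero] at h
    left
    refine ⟨rfl, ?_⟩
    by_contra hc
    exact h (Matrix.one_apply_ne hc)
  | succ n ih =>
    intro u v hne
    rw [pow_succ, Matrix.mul_apply] at hne
    obtain ⟨w, -, hw⟩ := Finset.exists_ne_zero_of_sum_ne_zero hne
    have h1 : (Λ ^ n) u w ≠ 0 := fun h => hw (by simp [h])
    have h2 : Λ w v ≠ 0 := fun h => hw (by simp [h])
    have hEwv : E w v := by by_contra hc; exact h2 (hΛ w v hc)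
    rcases ih u w h1 with ⟨-, rfl⟩ | htg
    · exact Or.inr (Relation.TransGen.single hEwv)
    · exact Or.inr (htg.tail hEwv)

lemma inv_one_sub_eq {Λ : Matrix V V ℝ} {m : ℕ} (h : Λ ^ m = 0) :
    (1 - Λ)⁻¹ = ∑ k ∈ Finset.range m, Λ ^ k := by
  apply Matrix.inv_eq_right_inv
  have h2 := mul_geom_sum Λ m
  have h3 : (1 - Λ) * ∑ k ∈ Finset.range m, Λ ^ k
      = -((Λ - 1) * ∑ k ∈ Finset.range m, Λ ^ k) := by
    rw [neg_mul_eq_neg_mul, neg_sub]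
  rw [h3, h2, h, zero_sub, neg_neg]

lemma geom_mul_one_sub {Λ : Matrix V V ℝ} {m : ℕ} (h : Λ ^ m = 0) :
    (∑ k ∈ Finset.range m, Λ ^ k) * (1 - Λ) = 1 := by
  have h2 := geom_sum_mul Λ m
  have h3 : (∑ k ∈ Finset.range m, Λ ^ k) * (1 - Λ)
      = -((∑ k ∈ Finset.range m, Λ ^ k) * (Λ - 1)) := by
    rw [show (1 : Matrix V V ℝ) - Λ = -(Λ - 1) by rw [neg_sub], mul_neg]
  rw [h3, h2, h, zero_sub, neg_neg]

end Aux

section Aux2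
variable {V : Type} [Fintype V] [DecidableEq V]

omit [DecidableEq V] in
lemma posdef_conj {W : Type} [Fintype W] {Ω : Matrix V V ℝ} (hΩ : Ω.PosDef)
    (B : Matrix V W ℝ) (hB : Function.Injective B.mulVec) : (Bᵀ * Ω * B).PosDef := by
  refine Matrix.PosDef.of_dotProduct_mulVec_pos ?_ ?_
  · have h := Matrix.isHermitian_conjTranspose_mul_mul B hΩ.1
    rwa [Matrix.conjTranspose_eq_transpose_of_trivial] at h
  · intro x hx
    have hx' : B *ᵥ x ≠ 0 := by
      intro hc
      apply hx
      apply hB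
      rw [hc, Matrix.mulVec_zero]
    have h2 := hΩ.dotProduct_mulVec_pos hx'
    simpa only [Matrix.star_mulVec, Matrix.dotProduct_mulVec, Matrix.vecMul_vecMul,
      Matrix.conjTranspose_eq_transpose_of_trivial] using h2

lemma posdef_submatrix {W : Type} [Fintype W] [DecidableEq W] {S : Matrix V V ℝ}
    (hS : S.PosDef) {f : W → V} (hf : Function.Injective f) :
    (S.submatrix f f).PosDef := by
  have hrw : S.submatrix f f
      = ((1 : Matrix V V ℝ).submatrix id f)ᵀ * S * ((1 : Matrix V V ℝ).submatrix id f) := by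
    rw [Matrix.transpose_submatrix, Matrix.transpose_one]
    ext i j
    simp [Matrix.mul_apply, Matrix.submatrix_apply, Matrix.one_apply, Finset.sum_ite_eq,
      Finset.sum_ite_eq', ite_mul, mul_ite]
  rw [hrw]
  apply posdef_conj hS
  have hBx : ∀ (x : W → ℝ) (w : W), (((1 : Matrix V V ℝ).submatrix id f) *ᵥ x) (f w) = x w := by
    intro x w
    simp only [Matrix.mulVec, dotProduct, Matrix.submatrix_apply, id]
    rw [Finset.sum_eq_single w]
    · simp [Matrix.one_apply]
    · intro b _ hb
      show (1 : Matrix V V ℝ) (id (f w)) (f b) * x b = 0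
      rw [id, Matrix.one_apply_ne fun hc => hb (hf hc).symm, zero_mul]
    · simp
  intro x y hxy
  funext w
  have := congrFun hxy (f w)
  rwa [hBx, hBx] at this

lemma one_sub_mul_geom {Λ : Matrix V V ℝ} {m : ℕ} (h : Λ ^ m = 0) :
    (1 - Λ) * (∑ k ∈ Finset.range m, Λ ^ k) = 1 := by
  have h2 := mul_geom_sum Λ m
  have h3 : (1 - Λ) * ∑ k ∈ Finset.range m, Λ ^ k
      = -((Λ - 1) * ∑ k ∈ Finset.range m, Λ ^ k) := by
    rw [neg_mul_eq_neg_mul, neg_sub]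
  rw [h3, h2, h, zero_sub, neg_neg]

end Aux2

theorem stmt1 {V : Type} [Fintype V] [DecidableEq V] (E : V → V → Prop)
    [DecidableRel E] (hE : Acyclic E) (Λ Ω S : Matrix V V ℝ)
    (hΛ : SupportedOn E Λ) (hΩd : Ω.IsDiag) (hΩp : ∀ v, 0 < Ω v v)
    (hS : S = ((1 - Λ)⁻¹)ᵀ * Ω * (1 - Λ)⁻¹) :
    (∀ u v, ∀ h : E u v,
        Λ u v = ∑ w : {x // E x v},
          S v w.1 * (Matrix.of fun a b : {x // E x v} => S a.1 b.1)⁻¹ w ⟨u, h⟩) ∧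
    (∀ v, Ω v v = S v v - ∑ w : {x // E x v}, ∑ w' : {x // E x v},
          S v w.1 * (Matrix.of fun a b : {x // E x v} => S a.1 b.1)⁻¹ w w' * S w'.1 v) := by
  classical
  set m := Fintype.card V + 2 with hmdef
  have hm : Λ ^ m = 0 := lam_pow_zero hE hΛ
  set N := (1 - Λ)⁻¹ with hNdef
  have hNG : N = ∑ k ∈ Finset.range m, Λ ^ k := inv_one_sub_eq hm
  have hNl : N * (1 - Λ) = 1 := by rw [hNG]; exact geom_mul_one_sub hm
  have hNr : (1 - Λ) * N = 1 := by rw [hNG]; exact one_sub_mul_geom hm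
  -- diagonal entries of N are 1
  have hNdiag : ∀ v, N v v = 1 := by
    intro v
    rw [hNG, Matrix.sum_apply]
    rw [Finset.sum_eq_single_of_mem 0 (Finset.mem_range.mpr (by omega))]
    · simp [Matrix.one_apply]
    · intro k _ hk
      by_contra hne
      rcases lam_pow_entry hΛ k v v hne with ⟨h0, -⟩ | htg
      · exact hk h0
      · exact hE v htg
  -- entries N v a with E a v vanish
  have hNoff : ∀ a v, E a v → N v a = 0 := by
    intro a v hav
    rw [hNG, Matrix.sum_apply]
    apply Finset.sum_eq_zero
    intro k _
    by_contra hne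
    rcases lam_pow_entry hΛ k v a hne with ⟨-, rfl⟩ | htg
    · exact hE v (Relation.TransGen.single hav)
    · exact hE a (Relation.TransGen.head hav htg)
  -- the master equation
  have hmaster : ∀ a v, S a v - ∑ u, S a u * Λ u v = N v a * Ω v v := by
    intro a v
    have hSeq : S * (1 - Λ) = Nᵀ * Ω := by
      rw [hS, mul_assoc (Nᵀ * Ω) N (1 - Λ), hNl, mul_one]
    have h1 : (S * (1 - Λ)) a v = S a v - ∑ u, S a u * Λ u v := by
      rw [mul_sub, mul_one, Matrix.sub_apply, Matrix.mul_apply]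
    have h2 : (Nᵀ * Ω) a v = N v a * Ω v v := by
      rw [Matrix.mul_apply]
      rw [Finset.sum_eq_single_of_mem v (Finset.mem_univ v)]
      · rw [Matrix.transpose_apply]
      · intro b _ hb
        rw [hΩd hb, mul_zero]
    rw [← h1, hSeq, h2]
  -- restrict sums to parents
  have hpar : ∀ a v, (∑ u, S a u * Λ u v) = ∑ w : {x // E x v}, S a w.1 * Λ w.1 v := by
    intro a v
    rw [← Finset.sum_subtype (Finset.univ.filter (fun u => E u v))
      (by simp) (fun u => S a u * Λ u v)]
    symm
    apply Finset.sum_subset (Finset.subset_univ _)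
    intro x _ hx
    simp only [Finset.mem_filter, Finset.mem_univ, true_and] at hx
    rw [hΛ x v hx, mul_zero]
  -- positive definiteness
  have hΩpd : Ω.PosDef := by
    rw [← hΩd.diagonal_diag]
    exact Matrix.PosDef.diagonal hΩp
  have hNinj : Function.Injective N.mulVec := by
    intro x y hxy
    have hx := congrArg ((1 - Λ).mulVec) hxy
    rwa [Matrix.mulVec_mulVec, Matrix.mulVec_mulVec, hNr, Matrix.one_mulVec,
      Matrix.one_mulVec] at hx
  have hSpd : S.PosDef := by
    rw [hS]
    exact posdef_conj hΩpd N hNinj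
  have hSsymm : ∀ i j, S i j = S j i := by
    intro i j
    have := hSpd.1.apply i j
    rw [star_trivial] at this
    rw [← this]
  constructor
  · intro u v h
    set P := (Matrix.of fun a b : {x // E x v} => S a.1 b.1) with hPdef
    have hPsub : P = S.submatrix Subtype.val Subtype.val := rfl
    have hPpd : P.PosDef := by
      rw [hPsub]; exact posdef_submatrix hSpd Subtype.val_injective
    have hPdet : IsUnit P.det := (Matrix.isUnit_iff_isUnit_det P).mp hPpd.isUnit
    have hPsymm : Pᵀ = P := by
      ext i j; exact hSsymm j.1 i.1
    have hPinv_symm : ∀ i j, P⁻¹ i j = P⁻¹ j i := by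
      intro i j
      have : (P⁻¹)ᵀ = P⁻¹ := by rw [Matrix.transpose_nonsing_inv, hPsymm]
      exact (congrFun (congrFun this i) j).symm
    set lamvec : {x // E x v} → ℝ := fun w => Λ w.1 v with hlamdef
    set svec : {x // E x v} → ℝ := fun w => S w.1 v with hsdef
    have hPl : P *ᵥ lamvec = svec := by
      funext w
      have h0 := hmaster w.1 v
      rw [hNoff w.1 v w.2, zero_mul, sub_eq_zero] at h0
      calc (P *ᵥ lamvec) w = ∑ w' : {x // E x v}, S w.1 w'.1 * Λ w'.1 v := by
            simp [Matrix.mulVec, dotProduct, hPdef, hlamdef]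
        _ = ∑ u, S w.1 u * Λ u v := (hpar w.1 v).symm
        _ = S w.1 v := h0.symm
    have hlam : lamvec = P⁻¹ *ᵥ svec := by
      rw [← hPl, Matrix.mulVec_mulVec, Matrix.nonsing_inv_mul P hPdet, Matrix.one_mulVec]
    have : Λ u v = (P⁻¹ *ᵥ svec) ⟨u, h⟩ := by
      rw [← hlam]
    rw [this, Matrix.mulVec, dotProduct]
    apply Finset.sum_congr rfl
    intro w _
    rw [hPinv_symm ⟨u, h⟩ w, hSsymm v w.1, mul_comm]
  · intro v
    set P := (Matrix.of fun a b : {x // E x v} => S a.1 b.1) with hPdef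
    have hPsub : P = S.submatrix Subtype.val Subtype.val := rfl
    have hPpd : P.PosDef := by
      rw [hPsub]; exact posdef_submatrix hSpd Subtype.val_injective
    have hPdet : IsUnit P.det := (Matrix.isUnit_iff_isUnit_det P).mp hPpd.isUnit
    set lamvec : {x // E x v} → ℝ := fun w => Λ w.1 v with hlamdef
    set svec : {x // E x v} → ℝ := fun w => S w.1 v with hsdef
    have hPl : P *ᵥ lamvec = svec := by
      funext w
      have h0 := hmaster w.1 v
      rw [hNoff w.1 v w.2, zero_mul, sub_eq_zero] at h0
      calc (P *ᵥ lamvec) w = ∑ w' : {x // E x v}, S w.1 w'.1 * Λ w'.1 v := by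
            simp [Matrix.mulVec, dotProduct, hPdef, hlamdef]
        _ = ∑ u, S w.1 u * Λ u v := (hpar w.1 v).symm
        _ = S w.1 v := h0.symm
    have hlam : lamvec = P⁻¹ *ᵥ svec := by
      rw [← hPl, Matrix.mulVec_mulVec, Matrix.nonsing_inv_mul P hPdet, Matrix.one_mulVec]
    have h0 := hmaster v v
    rw [hNdiag v, one_mul] at h0
    rw [← h0, hpar v v]
    congr 1
    calc ∑ w : {x // E x v}, S v w.1 * Λ w.1 v
        = ∑ w : {x // E x v}, S v w.1 * (P⁻¹ *ᵥ svec) w := by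
          rw [← hlam]
      _ = ∑ w : {x // E x v}, ∑ w' : {x // E x v}, S v w.1 * P⁻¹ w w' * S w'.1 v := by
          apply Finset.sum_congr rfl
          intro w _
          rw [Matrix.mulVec, dotProduct, Finset.mul_sum]
          apply Finset.sum_congr rfl
          intro w' _
          rw [mul_assoc]
end

section
/- Trek rule: Let D = (V,E) be an acyclic digraph, Λ ∈ ℝ^E, and Ω diagonal with positive entries ω_{vv}. Then the covariance matrix Σ = (I-Λ)^{-T} Ω (I-Λ)^{-1} satisfies σ_{uv} = Σ_{τ ∈ T(u,v)} σ(τ), where T(u,v) is the (finite) set of treks from u to v, and for a trek τ with top node t, σ(τ) = ω_{tt} · Π_{x→y ∈ τ} λ_{xy}. -/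
open Matrix BigOperators

section TrekAux

variable {V : Type} [Fintype V] [DecidableEq V] {E : V → V → Prop}

lemma nodup_of_chain' (hE : Acyclic E) {l : List V} (hc : List.Chain' E l) : l.Nodup := by
  have h1 : List.Chain' (Relation.TransGen E) l :=
    List.IsChain.imp (fun a b h => Relation.TransGen.single h) hc
  have h2 : l.Pairwise (Relation.TransGen E) := List.isChain_iff_pairwise.mp h1
  have h3 : l.Pairwise (· ≠ ·) :=
    h2.imp fun {a b} (h : Relation.TransGen E a b) (he : a = b) => hE b (by rwa [he] at h)
  exact h3

lemma edgeProd_singleton (Λ : Matrix V V ℝ) (a : V) : edgeProd Λ [a] = 1 := by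
  simp [edgeProd]

lemma edgeProd_cons_cons (Λ : Matrix V V ℝ) (a b : V) (l : List V) :
    edgeProd Λ (a :: b :: l) = Λ a b * edgeProd Λ (b :: l) := by
  simp [edgeProd]

lemma edgeProd_eq_zero {Λ : Matrix V V ℝ} (hΛ : SupportedOn E Λ) :
    ∀ l : List V, ¬ List.Chain' E l → edgeProd Λ l = 0
  | [], h => absurd List.isChain_nil h
  | [a], h => absurd (List.isChain_singleton a) h
  | a :: b :: l, h => by
    rw [edgeProd_cons_cons]
    simp only [List.Chain', List.isChain_cons_cons] at h
    by_cases hab : E a b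
    · rw [edgeProd_eq_zero hΛ (b :: l) fun hc => h ⟨hab, hc⟩, mul_zero]
    · rw [hΛ a b hab, zero_mul]

lemma pow_apply_eq (Λ : Matrix V V ℝ) :
    ∀ (k : ℕ) (t u : V),
      (Λ ^ (k + 1)) t u = ∑ f : Fin k → V, edgeProd Λ (t :: (List.ofFn f ++ [u]))
  | 0, t, u => by
    rw [pow_one, Fintype.sum_unique]
    simp [edgeProd]
  | (k + 1), t, u => by
    rw [pow_succ', Matrix.mul_apply]
    simp_rw [pow_apply_eq Λ k, Finset.mul_sum]
    rw [← (Fin.consEquiv (fun _ : Fin (k + 1) => V)).sum_comp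
      (fun f => edgeProd Λ (t :: (List.ofFn f ++ [u]))), Fintype.sum_prod_type]
    refine Finset.sum_congr rfl fun s _ => Finset.sum_congr rfl fun f _ => ?_
    have : List.ofFn (Fin.cons s f : Fin (k + 1) → V) = s :: List.ofFn f := by
      simp [List.ofFn_succ]
    simp only [Fin.consEquiv, Equiv.coe_fn_mk]
    rw [this, List.cons_append, edgeProd_cons_cons]

lemma pow_card_succ_eq_zero (hE : Acyclic E) {Λ : Matrix V V ℝ} (hΛ : SupportedOn E Λ) :
    Λ ^ (Fintype.card V + 1) = 0 := by
  ext t u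
  rw [pow_apply_eq]
  simp only [Matrix.zero_apply]
  refine Finset.sum_eq_zero fun f _ => ?_
  by_cases hc : List.Chain' E (t :: (List.ofFn f ++ [u]))
  · exfalso
    have := (nodup_of_chain' hE hc).length_le_card
    simp only [List.length_cons, List.length_append, List.length_ofFn,
      List.length_singleton] at this
    omega
  · exact edgeProd_eq_zero hΛ _ hc

lemma inv_one_sub_eq_geom (hE : Acyclic E) {Λ : Matrix V V ℝ} (hΛ : SupportedOn E Λ) :
    (1 - Λ)⁻¹ = ∑ k ∈ Finset.range (Fintype.card V + 1), Λ ^ k := by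
  refine Matrix.inv_eq_left_inv ?_
  have h := geom_sum_mul Λ (Fintype.card V + 1)
  rw [pow_card_succ_eq_zero hE hΛ] at h
  have h2 : (∑ k ∈ Finset.range (Fintype.card V + 1), Λ ^ k) * (1 - Λ)
      = -((∑ k ∈ Finset.range (Fintype.card V + 1), Λ ^ k) * (Λ - 1)) := by
    noncomm_ring
  rw [h2, h]
  simp

/-- Directed paths from `t` to `u`. -/
def PathSet (E : V → V → Prop) (t u : V) : Set (List V) :=
  {l | l ≠ [] ∧ l.head? = some t ∧ l.getLast? = some u ∧ List.Chain' E l}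

lemma pathSet_finite (hE : Acyclic E) (t u : V) : (PathSet E t u).Finite :=
  (List.finite_length_le V (Fintype.card V)).subset fun l hl =>
    (nodup_of_chain' hE hl.2.2.2).length_le_card

lemma mem_pathSet_iff (t u : V) (L : List V) :
    (t :: (L ++ [u])) ∈ PathSet E t u ↔ List.Chain' E (t :: (L ++ [u])) := by
  constructor
  · exact fun h => h.2.2.2
  · intro h
    refine ⟨by simp, by simp, ?_, h⟩
    rw [List.getLast?_eq_getLast_of_ne_nil (by simp)]
    simp [List.getLast_cons, List.getLast_append]

lemma singleton_mem_pathSet_iff (t u : V) : [t] ∈ PathSet E t u ↔ t = u := by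
  constructor
  · rintro ⟨-, -, h, -⟩
    simpa using h
  · rintro rfl
    exact ⟨by simp, by simp, by simp, List.isChain_singleton t⟩

lemma finsum_mem_eq_sum_comp {S : Set (List V)} (hS : S.Finite) {ι : Type} [Fintype ι]
    {e : ι → List V} (he : Function.Injective e) (f : List V → ℝ)
    (h0 : ∀ l ∈ S, l ∈ Set.range e)
    (h1 : ∀ x, e x ∉ S → f (e x) = 0) :
    ∑ᶠ l ∈ S, f l = ∑ x, f (e x) := by
  classical
  rw [finsum_mem_eq_finite_toFinset_sum _ hS]
  have himg : ∑ x ∈ Finset.univ.image e, f x = ∑ x, f (e x) :=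
    Finset.sum_image (fun x _ y _ h => he h)
  rw [← himg]
  refine Finset.sum_subset ?_ ?_
  · intro l hl
    rw [Set.Finite.mem_toFinset] at hl
    obtain ⟨x, rfl⟩ := h0 l hl
    exact Finset.mem_image_of_mem e (Finset.mem_univ x)
  · intro l hl hl2
    rw [Finset.mem_image] at hl
    obtain ⟨x, -, rfl⟩ := hl
    rw [Set.Finite.mem_toFinset] at hl2
    exact h1 x hl2

lemma sum_pathSet (hE : Acyclic E) {Λ : Matrix V V ℝ} (hΛ : SupportedOn E Λ) (t u : V) :
    ∑ᶠ l ∈ PathSet E t u, edgeProd Λ l = (1 - Λ)⁻¹ t u := by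
  classical
  set n := Fintype.card V with hn
  set S := PathSet E t u with hSdef
  set e : Option ((k : Fin n) × (Fin (k : ℕ) → V)) → List V :=
    fun x => match x with
      | none => [t]
      | some ⟨_, f⟩ => t :: (List.ofFn f ++ [u]) with hedef
  have he : Function.Injective e := by
    rintro (_ | ⟨k, f⟩) (_ | ⟨k', f'⟩) h
    · rfl
    · exfalso
      have := congrArg List.length h
      simp [hedef] at this
    · exfalso
      have := congrArg List.length h
      simp [hedef] at this
    · simp only [hedef, List.cons.injEq, true_and] at h
      have hk : (k : ℕ) = (k' : ℕ) := by
        have := congrArg List.length h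
        simpa using this
      obtain rfl : k = k' := Fin.ext hk
      have hf : f = f' := by
        have := List.append_cancel_right h
        exact List.ofFn_injective this
      rw [hf]
  have key : ∑ᶠ l ∈ S, edgeProd Λ l = ∑ x, Set.indicator S (edgeProd Λ) (e x) := by
    rw [finsum_mem_congr rfl (fun l hl => (Set.indicator_of_mem hl (edgeProd Λ)).symm)]
    refine finsum_mem_eq_sum_comp (pathSet_finite hE t u) he _ ?_ ?_
    · rintro l ⟨hne, hh, hlast, hc⟩
      match l, hne with
      | [a], _ =>
        have ha : a = t := by simpa using hh
        exact ⟨none, by simp [hedef, ha]⟩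
      | a :: b :: l', _ =>
        have ha : a = t := by simpa using hh
        subst ha
        have hbl : b :: l' = (b :: l').dropLast ++ [u] := by
          have h2 : (b :: l').getLast? = some u := by
            rw [← hlast, List.getLast?_cons_cons]  -- maybe wrong
          conv_lhs => rw [← List.dropLast_append_getLast (l := b :: l') (by simp)]
          congr 1
          rw [List.getLast?_eq_getLast_of_ne_nil (by simp)] at h2
          simpa using h2
        have hlen : ((b :: l').dropLast).length < n := by
          have h3 := (nodup_of_chain' hE hc).length_le_card
          simp only [List.length_cons] at h3
          have h5 : ((b :: l').dropLast).length = l'.length := by simp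
          rw [h5]
          omega
        refine ⟨some ⟨⟨((b :: l').dropLast).length, hlen⟩, fun i => ((b :: l').dropLast).get i⟩, ?_⟩
        simp only [hedef]
        rw [List.ofFn_get]
        rw [← hbl]
    · intro x hx
      exact Set.indicator_of_notMem hx _
  rw [key, inv_one_sub_eq_geom hE hΛ, Matrix.sum_apply, Finset.sum_range_succ',
    Fintype.sum_option]
  have hnone : Set.indicator S (edgeProd Λ) (e none) = (Λ ^ 0) t u := by
    simp only [hedef, pow_zero, Matrix.one_apply]
    by_cases htu : t = u
    · rw [Set.indicator_of_mem ((singleton_mem_pathSet_iff t u).mpr htu)]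
      simp [edgeProd_singleton, htu]
    · rw [Set.indicator_of_notMem (fun hmem => htu ((singleton_mem_pathSet_iff t u).mp hmem))]
      simp [htu]
  rw [hnone]
  rw [add_comm]
  congr 1
  rw [← Finset.univ_sigma_univ, Finset.sum_sigma]
  rw [← Fin.sum_univ_eq_sum_range (fun k => (Λ ^ (k + 1)) t u) n]
  refine Finset.sum_congr rfl fun k _ => ?_
  rw [pow_apply_eq]
  refine Finset.sum_congr rfl fun f _ => ?_
  simp only [hedef]
  by_cases hc : List.Chain' E (t :: (List.ofFn f ++ [u]))
  · rw [Set.indicator_of_mem ((mem_pathSet_iff t u _).mpr hc)]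
  · rw [Set.indicator_of_notMem (fun hmem => hc ((mem_pathSet_iff t u _).mp hmem))]
    exact (edgeProd_eq_zero hΛ _ hc).symm

/-- A trek is the same as a top together with a path to `u` and a path to `v`. -/
def trekEquiv (E : V → V → Prop) (u v : V) :
    Trek E u v ≃ Σ t : V, PathSet E t u × PathSet E t v where
  toFun τ := ⟨τ.top,
    ⟨τ.left, τ.left_ne, by rw [List.head?_eq_head τ.left_ne]; rfl,
      by rw [List.getLast?_eq_getLast_of_ne_nil τ.left_ne, τ.last_left], τ.chain_left⟩,
    ⟨τ.right, τ.right_ne, by rw [List.head?_eq_head τ.right_ne, ← τ.top_eq]; rfl,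
      by rw [List.getLast?_eq_getLast_of_ne_nil τ.right_ne, τ.last_right], τ.chain_right⟩⟩
  invFun x :=
    { left := x.2.1.1
      right := x.2.2.1
      left_ne := x.2.1.2.1
      right_ne := x.2.2.2.1
      top_eq := by
        have h1 := x.2.1.2.2.1
        have h2 := x.2.2.2.2.1
        rw [List.head?_eq_head x.2.1.2.1] at h1
        rw [List.head?_eq_head x.2.2.2.1] at h2
        rw [Option.some_inj] at h1 h2
        rw [h1, h2]
      chain_left := x.2.1.2.2.2.2
      chain_right := x.2.2.2.2.2.2
      last_left := by
        have h1 := x.2.1.2.2.2.1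
        rw [List.getLast?_eq_getLast_of_ne_nil x.2.1.2.1, Option.some_inj] at h1
        exact h1
      last_right := by
        have h1 := x.2.2.2.2.2.1
        rw [List.getLast?_eq_getLast_of_ne_nil x.2.2.2.1, Option.some_inj] at h1
        exact h1 }
  left_inv τ := rfl
  right_inv x := by
    obtain ⟨t, ⟨l, hl⟩, ⟨r, hr⟩⟩ := x
    have hne : l ≠ [] := hl.1
    have ht : l.head hne = t := by
      have := hl.2.1
      rwa [List.head?_eq_head hne, Option.some_inj] at this
    subst ht
    rfl

lemma mono_trekEquiv_symm (E : V → V → Prop) (u v : V) (Λ Ω : Matrix V V ℝ)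
    (x : Σ t : V, PathSet E t u × PathSet E t v) :
    ((trekEquiv E u v).symm x).mono Λ Ω = Ω x.1 x.1 * edgeProd Λ x.2.1.1 * edgeProd Λ x.2.2.1 := by
  obtain ⟨t, ⟨l, hl⟩, ⟨r, hr⟩⟩ := x
  have hne : l ≠ [] := hl.1
  have ht : l.head hne = t := by
    have := hl.2.1
    rwa [List.head?_eq_head hne, Option.some_inj] at this
  simp only [trekEquiv, Trek.mono, Trek.top, Equiv.coe_fn_symm_mk]
  rw [ht]

end TrekAux
theorem stmt2 {V : Type} [Fintype V] [DecidableEq V] (E : V → V → Prop)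
    (hE : Acyclic E) (Λ Ω : Matrix V V ℝ)
    (hΛ : SupportedOn E Λ) (hΩd : Ω.IsDiag) (hΩp : ∀ v, 0 < Ω v v)
    (S : Matrix V V ℝ) (hS : S = ((1 - Λ)⁻¹)ᵀ * Ω * (1 - Λ)⁻¹) (u v : V) :
    Finite (Trek E u v) ∧
      S u v = ∑ᶠ τ : Trek E u v, τ.mono Λ Ω := by
  classical
  have hfin : ∀ t w, (PathSet E t w).Finite := fun t w => pathSet_finite hE t w
  haveI : ∀ t w, Finite ↥(PathSet E t w) := fun t w => (hfin t w).to_subtype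
  haveI hTrekFin : Finite (Trek E u v) := Finite.of_equiv _ (trekEquiv E u v).symm
  refine ⟨hTrekFin, ?_⟩
  letI : ∀ t w, Fintype ↥(PathSet E t w) := fun t w => Fintype.ofFinite _
  have hM : ∀ t w, ∑ x : ↥(PathSet E t w), edgeProd Λ (x : List V) = (1 - Λ)⁻¹ t w := by
    intro t w
    rw [← finsum_eq_sum_of_fintype, finsum_set_coe_eq_finsum_mem, sum_pathSet hE hΛ]
  have h1 : ∑ᶠ τ : Trek E u v, τ.mono Λ Ω
      = ∑ x : (t : V) × (↥(PathSet E t u) × ↥(PathSet E t v)),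
          ((trekEquiv E u v).symm x).mono Λ Ω := by
    rw [← finsum_eq_sum_of_fintype]
    exact finsum_eq_of_bijective (trekEquiv E u v) (trekEquiv E u v).bijective
      (fun τ => by rw [Equiv.symm_apply_apply])
  have h2 : ∀ t : V, ∑ p : ↥(PathSet E t u) × ↥(PathSet E t v),
      ((trekEquiv E u v).symm ⟨t, p⟩).mono Λ Ω
      = Ω t t * ((1 - Λ)⁻¹ t u) * ((1 - Λ)⁻¹ t v) := by
    intro t
    have hmono := fun p : ↥(PathSet E t u) × ↥(PathSet E t v) =>
      mono_trekEquiv_symm E u v Λ Ω ⟨t, p⟩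
    simp_rw [hmono]
    rw [Fintype.sum_prod_type]
    have hsum : ∑ a : ↥(PathSet E t u), ∑ b : ↥(PathSet E t v),
        (Ω t t * edgeProd Λ (a : List V)) * edgeProd Λ (b : List V)
        = (∑ a : ↥(PathSet E t u), Ω t t * edgeProd Λ (a : List V))
          * (∑ b : ↥(PathSet E t v), edgeProd Λ (b : List V)) :=
      (Finset.sum_mul_sum _ _ _ _).symm
    rw [hsum, ← Finset.mul_sum, hM, hM]
  have hL : (((1 - Λ)⁻¹)ᵀ * Ω * (1 - Λ)⁻¹ : Matrix V V ℝ) u v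
      = ∑ t : V, Ω t t * ((1 - Λ)⁻¹ t u) * ((1 - Λ)⁻¹ t v) := by
    rw [Matrix.mul_apply]
    simp_rw [Matrix.mul_apply, Matrix.transpose_apply]
    refine Finset.sum_congr rfl fun j _ => ?_
    have hin : ∑ i, (1 - Λ)⁻¹ i u * Ω i j = (1 - Λ)⁻¹ j u * Ω j j :=
      Finset.sum_eq_single j (fun i _ hij => by rw [hΩd hij, mul_zero])
        (fun h => absurd (Finset.mem_univ j) h)
    rw [hin]
    ring
  rw [hS, hL, h1, ← Finset.univ_sigma_univ, Finset.sum_sigma]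
  exact Finset.sum_congr rfl fun t _ => (h2 t).symm
end

section
/- Let G = (V,D,B) be an acyclic mixed graph and let D(G) = (U,E) be its clique digraph with U = V ∪ C_2 (C_2 the set of non-singleton cliques of (V,B)). Then for any parameters of the digraph model, the V-marginal covariance matrix satisfies Σ = (I − Γ_{11})^{-T} (Δ_{11} + Γ_{21}^T Δ_{22} Γ_{21}) (I − Γ_{11})^{-1}, where the blocks are with respect to the partition U = V ∪ C_2, and the matrix Δ_{11} + Γ_{21}^T Δ_{22} Γ_{21} belongs to PD(B), i.e., is positive definite with zero entries at non-adjacent pairs of (V,B). -/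
open Matrix BigOperators

def CliqueType {V : Type} [DecidableEq V] (B : SimpleGraph V) : Type :=
  {s : Finset V // B.IsClique ↑s ∧ 2 ≤ s.card}

noncomputable instance {V : Type} [Fintype V] [DecidableEq V] (B : SimpleGraph V) :
    Fintype (CliqueType B) := by
  classical
  unfold CliqueType
  infer_instance

instance {V : Type} [DecidableEq V] (B : SimpleGraph V) :
    DecidableEq (CliqueType B) := by
  unfold CliqueType
  infer_instance

open scoped Classical in
theorem stmt5 {V : Type} [Fintype V] [DecidableEq V] (D : V → V → Prop)
    (B : SimpleGraph V) (hD : Acyclic D)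
    (Γ11 : Matrix V V ℝ) (hΓ11 : SupportedOn D Γ11)
    (Γ21 : Matrix (CliqueType B) V ℝ) (hΓ21 : ∀ h v, v ∉ h.1 → Γ21 h v = 0)
    (Δ11 : Matrix V V ℝ) (Δ22 : Matrix (CliqueType B) (CliqueType B) ℝ)
    (hΔ11 : Δ11.IsDiag) (hΔ22 : Δ22.IsDiag)
    (h11p : ∀ v, 0 < Δ11 v v) (h22p : ∀ h, 0 < Δ22 h h)
    (M : Matrix (V ⊕ CliqueType B) (V ⊕ CliqueType B) ℝ)
    (hM : M = ((1 - Matrix.fromBlocks Γ11 0 Γ21 0)⁻¹)ᵀ *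
        Matrix.fromBlocks Δ11 0 0 Δ22 * (1 - Matrix.fromBlocks Γ11 0 Γ21 0)⁻¹) :
    (Matrix.of fun u v : V => M (Sum.inl u) (Sum.inl v)) =
      ((1 - Γ11)⁻¹)ᵀ * (Δ11 + Γ21ᵀ * Δ22 * Γ21) * (1 - Γ11)⁻¹ ∧
    (Δ11 + Γ21ᵀ * Δ22 * Γ21).PosDef ∧
    BSupported B (Δ11 + Γ21ᵀ * Δ22 * Γ21) := by
  classical
  set A : Matrix V V ℝ := 1 - Γ11 with hA
  have hmidEq : ∀ u v : V, (Δ11 + Γ21ᵀ * Δ22 * Γ21) u v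
      = Δ11 u v + ∑ k : CliqueType B, Γ21 k u * Δ22 k k * Γ21 k v := by
    intro u v
    simp only [Matrix.add_apply, Matrix.mul_apply, Matrix.transpose_apply]
    congr 1
    refine Finset.sum_congr rfl fun k _ => ?_
    rw [Finset.sum_eq_single k (fun h _ hne => by rw [hΔ22 hne]; ring)
      (fun h => absurd (Finset.mem_univ k) h)]
  have hsupp : BSupported B (Δ11 + Γ21ᵀ * Δ22 * Γ21) := by
    intro u v huv hadj
    rw [hmidEq]
    rw [hΔ11 huv, zero_add]
    refine Finset.sum_eq_zero fun k _ => ?_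
    by_cases hu : u ∈ k.1
    · by_cases hv : v ∈ k.1
      · exact absurd (k.2.1 hu hv huv) hadj
      · rw [hΓ21 k v hv]; ring
    · rw [hΓ21 k u hu]; ring
  have hpd : (Δ11 + Γ21ᵀ * Δ22 * Γ21).PosDef := by
    have h1 : Δ11.PosDef := by
      rw [← hΔ11.diagonal_diag]
      exact Matrix.posDef_diagonal_iff.mpr h11p
    have h2 : (Γ21ᵀ * Δ22 * Γ21).PosSemidef := by
      have hΔ : Δ22.PosSemidef := by
        rw [← hΔ22.diagonal_diag]
        exact Matrix.posSemidef_diagonal_iff.mpr fun i => (h22p i).le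
      have := hΔ.conjTranspose_mul_mul_same Γ21
      simpa [Matrix.conjTranspose_eq_transpose_of_trivial] using this
    exact h1.add_posSemidef h2
  refine ⟨?_, hpd, hsupp⟩
  have hblock : (1 - Matrix.fromBlocks Γ11 0 Γ21 0 :
      Matrix (V ⊕ CliqueType B) (V ⊕ CliqueType B) ℝ)
      = Matrix.fromBlocks A 0 (-Γ21) 1 := by
    ext i j
    rcases i with i | i <;> rcases j with j | j <;>
      simp [Matrix.one_apply, Matrix.sub_apply, hA]
  have hTB : (Matrix.of fun u v : V => M (Sum.inl u) (Sum.inl v)) = M.toBlocks₁₁ := rfl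
  by_cases hinv : IsUnit A.det
  · have hAinv : A * A⁻¹ = 1 := Matrix.mul_nonsing_inv A hinv
    have hinvBlock : (1 - Matrix.fromBlocks Γ11 0 Γ21 0 :
        Matrix (V ⊕ CliqueType B) (V ⊕ CliqueType B) ℝ)⁻¹
        = Matrix.fromBlocks A⁻¹ 0 (Γ21 * A⁻¹) 1 := by
      apply Matrix.inv_eq_right_inv
      rw [hblock, Matrix.fromBlocks_multiply]
      simp [hAinv, Matrix.neg_mul, Matrix.fromBlocks_one]
    rw [hTB, hM, hinvBlock, Matrix.fromBlocks_transpose, Matrix.fromBlocks_multiply,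
      Matrix.fromBlocks_multiply, Matrix.toBlocks_fromBlocks₁₁]
    simp only [Matrix.mul_zero, Matrix.zero_mul, add_zero, zero_add,
      Matrix.transpose_mul, Matrix.mul_add, Matrix.add_mul, Matrix.mul_assoc]
  · have hdet : ¬ IsUnit (1 - Matrix.fromBlocks Γ11 0 Γ21 0 :
        Matrix (V ⊕ CliqueType B) (V ⊕ CliqueType B) ℝ).det := by
      rw [hblock, Matrix.det_fromBlocks_zero₁₂]
      simpa using hinv
    have h0 : (1 - Matrix.fromBlocks Γ11 0 Γ21 0 :
        Matrix (V ⊕ CliqueType B) (V ⊕ CliqueType B) ℝ)⁻¹ = 0 :=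
      Matrix.nonsing_inv_apply_not_isUnit _ hdet
    have hA0 : A⁻¹ = 0 := Matrix.nonsing_inv_apply_not_isUnit _ hinv
    have hM0 : M = 0 := by rw [hM, h0]; simp
    ext u v
    rw [hM0, hA0]
    simp
end

section
/- Let p ≥ 4 and let B_p be the edge set of the p-cycle on vertices {1,…,p} (i adjacent to j iff |i−j| ∈ {1, p−1}). There exists a positive definite p × p matrix Φ supported on B_p such that the matrix Φ^{(12)}, obtained from Φ by negating the (1,2) and (2,1) entries, is not positive definite. -/
open Matrix BigOperators

lemma mySumThree {p : ℕ} (f : Fin p → ℝ) (a b c : Fin p)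
    (hab : a ≠ b) (hac : a ≠ c) (hbc : b ≠ c)
    (h0 : ∀ j, j ≠ a → j ≠ b → j ≠ c → f j = 0) :
    ∑ j, f j = f a + f b + f c := by
  have h : ∑ j, f j = ∑ j ∈ ({a, b, c} : Finset (Fin p)), f j := by
    refine (Finset.sum_subset (Finset.subset_univ _) ?_).symm
    intro x _ hx
    simp only [Finset.mem_insert, Finset.mem_singleton] at hx
    push_neg at hx
    exact h0 x hx.1 hx.2.1 hx.2.2
  rw [h, Finset.sum_insert (by simp [hab, hac]),
    Finset.sum_insert (by simp [hbc]), Finset.sum_singleton]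
  ring

noncomputable def sg (p : ℕ) [NeZero p] (i : Fin p) : ℝ := if i = 0 then 1 else -1

noncomputable def Phi (p : ℕ) [NeZero p] : Matrix (Fin p) (Fin p) ℝ :=
  Matrix.of fun i j => if i = j then 2 else if j = i + 1 then sg p i
    else if i = j + 1 then sg p j else 0

section cyc
variable {p : ℕ} [NeZero p] (hp : 4 ≤ p)

include hp

lemma myOneNeZero : (1 : Fin p) ≠ 0 := by
  simp [Fin.ext_iff, Fin.val_one', Nat.mod_eq_of_lt (show 1 < p by omega)]

lemma myTwoNeZero : (1 : Fin p) + 1 ≠ 0 := by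
  simp [Fin.ext_iff, Fin.add_def, Fin.val_one', Nat.mod_eq_of_lt (show 1 < p by omega),
    Nat.mod_eq_of_lt (show 1 + 1 < p by omega)]

lemma mySuccNe (i : Fin p) : i + 1 ≠ i := by
  intro h
  have : (1 : Fin p) = 0 := by
    have := add_left_cancel (a := i) (b := 1) (c := 0) (by simpa using h)
    simpa using this
  exact myOneNeZero hp this

lemma mySuccSuccNe (i : Fin p) : i + 1 + 1 ≠ i := by
  intro h
  rw [add_assoc] at h
  have : (1 : Fin p) + 1 = 0 := by
    have := add_left_cancel (a := i) (b := 1 + 1) (c := 0) (by simpa using h)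
    simpa using this
  exact myTwoNeZero hp this

lemma myPredNeSucc (i : Fin p) : i - 1 ≠ i + 1 := by
  intro h
  have h2 : i = i + 1 + 1 := by
    have : i - 1 + 1 = i + 1 + 1 := by rw [h]
    rw [sub_add_cancel] at this
    exact this
  exact mySuccSuccNe hp i h2.symm

lemma myPredNeSelf (i : Fin p) : i - 1 ≠ i := by
  intro h
  have : i - 1 + 1 = i + 1 := by rw [h]
  rw [sub_add_cancel] at this
  exact mySuccNe hp i this.symm

lemma Phi_symm (i j : Fin p) : Phi p j i = Phi p i j := by
  unfold Phi
  simp only [Matrix.of_apply]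
  rcases eq_or_ne i j with rfl | h
  · rfl
  · simp only [if_neg h, if_neg (Ne.symm h)]
    by_cases h1 : j = i + 1
    · have h2 : i ≠ j + 1 := by
        rw [h1]; intro hc; exact mySuccSuccNe hp i hc.symm
      rw [if_neg h2, if_pos h1, if_pos h1]
    · by_cases h2 : i = j + 1
      · rw [if_pos h2, if_neg h1, if_pos h2]
      · rw [if_neg h2, if_neg h1, if_neg h1, if_neg h2]

lemma Phi_diag (i : Fin p) : Phi p i i = 2 := by
  have := hp; simp [Phi]

lemma Phi_succ (i : Fin p) : Phi p i (i + 1) = sg p i := by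
  have hab : i ≠ i + 1 := fun h => mySuccNe hp i h.symm
  simp only [Phi, Matrix.of_apply, if_neg hab]
  simp

lemma Phi_pred (i : Fin p) : Phi p i (i - 1) = sg p (i - 1) := by
  have hac : i ≠ i - 1 := fun h => myPredNeSelf hp i h.symm
  have hbc : i + 1 ≠ i - 1 := fun h => myPredNeSucc hp i h.symm
  have h1 : i = i - 1 + 1 := (sub_add_cancel i 1).symm
  simp only [Phi, Matrix.of_apply, if_neg hac, if_neg (Ne.symm hbc), if_pos h1]

lemma Phi_other {i j : Fin p} (hja : j ≠ i) (hjb : j ≠ i + 1) (hjc : j ≠ i - 1) :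
    Phi p i j = 0 := by
  have := hp
  have h1 : i ≠ j := Ne.symm hja
  have h3 : i ≠ j + 1 := by
    intro h
    apply hjc
    rw [h, add_sub_cancel_right]
  simp only [Phi, Matrix.of_apply, if_neg h1, if_neg hjb, if_neg h3]

lemma Phi_mulVec (x : Fin p → ℝ) (i : Fin p) :
    (Phi p *ᵥ x) i = 2 * x i + sg p i * x (i + 1) + sg p (i - 1) * x (i - 1) := by
  have hab : i ≠ i + 1 := fun h => mySuccNe hp i h.symm
  have hac : i ≠ i - 1 := fun h => myPredNeSelf hp i h.symm
  have hbc : i + 1 ≠ i - 1 := fun h => myPredNeSucc hp i h.symm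
  have key := mySumThree (fun j => Phi p i j * x j) i (i + 1) (i - 1) hab hac hbc ?_
  · have hmv : (Phi p *ᵥ x) i = ∑ j, Phi p i j * x j := by
      simp [Matrix.mulVec, dotProduct]
    rw [hmv, key]
    beta_reduce
    rw [Phi_diag hp, Phi_succ hp, Phi_pred hp]
  · intro j hja hjb hjc
    beta_reduce
    rw [Phi_other hp hja hjb hjc, zero_mul]

lemma Phi_quadform (x : Fin p → ℝ) :
    x ⬝ᵥ (Phi p *ᵥ x) = ∑ i, (x i + sg p i * x (i + 1)) ^ 2 := by
  have hsq : ∀ i : Fin p, sg p i * sg p i = 1 := by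
    intro i; unfold sg; split_ifs <;> norm_num
  have S2eq : ∑ i : Fin p, sg p (i - 1) * (x i * x (i - 1))
      = ∑ i : Fin p, sg p i * (x i * x (i + 1)) := by
    refine Fintype.sum_equiv (Equiv.subRight (1 : Fin p)) _ _ ?_
    intro i
    simp only [Equiv.subRight_apply]
    rw [sub_add_cancel]
    ring_nf
  have S1eq : ∑ i : Fin p, x (i + 1) ^ 2 = ∑ i : Fin p, x i ^ 2 := by
    refine Fintype.sum_equiv (Equiv.addRight (1 : Fin p)) _ _ ?_
    intro i
    simp
  calc x ⬝ᵥ (Phi p *ᵥ x)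
      = ∑ i, (2 * x i ^ 2 + sg p i * (x i * x (i + 1)) + sg p (i - 1) * (x i * x (i - 1))) := by
        rw [dotProduct]
        refine Finset.sum_congr rfl fun i _ => ?_
        rw [Phi_mulVec hp]
        ring
    _ = ∑ i, 2 * x i ^ 2 + ∑ i, sg p i * (x i * x (i + 1))
          + ∑ i, sg p (i - 1) * (x i * x (i - 1)) := by
        rw [Finset.sum_add_distrib, Finset.sum_add_distrib]
    _ = ∑ i, 2 * x i ^ 2 + ∑ i, sg p i * (x i * x (i + 1))
          + ∑ i, sg p i * (x i * x (i + 1)) := by rw [S2eq]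
    _ = ∑ i, (x i ^ 2 + 2 * (sg p i * (x i * x (i + 1))) + x (i + 1) ^ 2) := by
        rw [Finset.sum_add_distrib, Finset.sum_add_distrib, S1eq, ← Finset.mul_sum,
          ← Finset.mul_sum]
        ring
    _ = ∑ i, (x i + sg p i * x (i + 1)) ^ 2 := by
        refine Finset.sum_congr rfl fun i _ => ?_
        have := hsq i
        ring_nf
        nlinarith [hsq i, sq_nonneg (x i), sq_nonneg (x (i+1))]


lemma sg_zero : sg p 0 = 1 := by have := hp; simp [sg]

lemma sg_ne_zero {i : Fin p} (h : i ≠ 0) : sg p i = -1 := by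
  have := hp; simp [sg, h]

lemma Phi_posDef : (Phi p).PosDef := by
  refine Matrix.PosDef.of_dotProduct_mulVec_pos ?_ ?_
  · ext i j
    simp only [Matrix.conjTranspose_apply, star_trivial]
    exact Phi_symm hp i j
  · intro x hx
    have hstar : star x = x := by
      funext i; simp
    rw [hstar, Phi_quadform hp]
    rcases lt_or_eq_of_le (Finset.sum_nonneg fun i _ => sq_nonneg (x i + sg p i * x (i + 1)))
      with h | h
    · exact h
    exfalso
    apply hx
    have hg : ∀ i : Fin p, x i + sg p i * x (i + 1) = 0 := by
      intro i
      have := (Finset.sum_eq_zero_iff_of_nonneg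
        (fun i _ => sq_nonneg (x i + sg p i * x (i + 1)))).mp h.symm i (Finset.mem_univ i)
      exact pow_eq_zero_iff (n := 2) (by norm_num) |>.mp this
    have h01 : x 0 + x 1 = 0 := by
      have := hg 0
      rwa [sg_zero hp, one_mul, zero_add] at this
    have hstep : ∀ i : Fin p, i ≠ 0 → x (i + 1) = x i := by
      intro i hi
      have := hg i
      rw [sg_ne_zero hp hi] at this
      linarith
    have hk : ∀ k : ℕ, 1 ≤ k → ∀ hk2 : k < p, x ⟨k, hk2⟩ = x 1 := by
      intro k
      induction k with
      | zero => omega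
      | succ n ih =>
        intro _ hk2
        rcases Nat.eq_zero_or_pos n with hn | hn
        · subst hn
          congr 1
          apply Fin.ext
          simp [Fin.val_one', Nat.mod_eq_of_lt (show 1 < p by omega)]
        · have hn2 : n < p := by omega
          have hne : (⟨n, hn2⟩ : Fin p) ≠ 0 := by
            intro hc
            have := congrArg Fin.val hc
            simp only [Fin.val_zero] at this
            omega
          have e : (⟨n, hn2⟩ : Fin p) + 1 = ⟨n + 1, hk2⟩ := by
            apply Fin.ext
            simp [Fin.add_def, Fin.val_one', Nat.mod_eq_of_lt (show 1 < p by omega),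
              Nat.mod_eq_of_lt hk2]
          have := hstep ⟨n, hn2⟩ hne
          rw [e] at this
          rw [this]
          exact ih hn hn2
    have hlast : x 0 = x 1 := by
      have hn2 : p - 1 < p := by omega
      have hne : (⟨p - 1, hn2⟩ : Fin p) ≠ 0 := by
        intro hc
        have := congrArg Fin.val hc
        simp only [Fin.val_zero] at this
        omega
      have e : (⟨p - 1, hn2⟩ : Fin p) + 1 = 0 := by
        have h1 : (1 : Fin p).val = 1 := by
          simp [Fin.val_one', Nat.mod_eq_of_lt (show 1 < p by omega)]
        apply Fin.ext
        rw [Fin.add_def]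
        simp only [h1, Fin.val_zero]
        show (p - 1 + 1) % p = 0
        rw [Nat.sub_add_cancel (by omega), Nat.mod_self]
      have := hstep _ hne
      rw [e] at this
      rw [this]
      exact hk (p - 1) (by omega) hn2
    have hx1 : x 1 = 0 := by linarith [h01, hlast]
    funext i
    obtain ⟨k, hk2⟩ := i
    rcases Nat.eq_zero_or_pos k with h0 | h0
    · subst h0
      have : (⟨0, hk2⟩ : Fin p) = 0 := by apply Fin.ext; simp
      rw [this]
      show x 0 = 0
      rw [hlast, hx1]
    · show x _ = 0
      rw [hk k h0 hk2, hx1]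

lemma flip_rowsum (i : Fin p) :
    ∑ j, (if (i = 0 ∧ j = 1) ∨ (i = 1 ∧ j = 0) then -Phi p i j else Phi p i j) = 0 := by
  have hab : i ≠ i + 1 := fun h => mySuccNe hp i h.symm
  have hac : i ≠ i - 1 := fun h => myPredNeSelf hp i h.symm
  have hbc : i + 1 ≠ i - 1 := fun h => myPredNeSucc hp i h.symm
  have key := mySumThree
    (fun j => if (i = 0 ∧ j = 1) ∨ (i = 1 ∧ j = 0) then -Phi p i j else Phi p i j)
    i (i + 1) (i - 1) hab hac hbc ?_
  · rw [key]
    beta_reduce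
    have e1 : (if (i = 0 ∧ i = 1) ∨ (i = 1 ∧ i = 0) then -Phi p i i else Phi p i i) = 2 := by
      rw [if_neg, Phi_diag hp]
      rintro (⟨h1, h2⟩ | ⟨h1, h2⟩) <;>
        exact myOneNeZero hp (h2 ▸ h1 ▸ rfl : (1 : Fin p) = 0)
    have e2 : (if (i = 0 ∧ i + 1 = 1) ∨ (i = 1 ∧ i + 1 = 0) then -Phi p i (i + 1)
        else Phi p i (i + 1)) = -1 := by
      by_cases hi : i = 0
      · rw [if_pos (Or.inl ⟨hi, by rw [hi, zero_add]⟩), Phi_succ hp, hi, sg_zero hp]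
      · rw [if_neg, Phi_succ hp, sg_ne_zero hp hi]
        rintro (⟨h1, _⟩ | ⟨h1, h2⟩)
        · exact hi h1
        · rw [h1] at h2
          exact myTwoNeZero hp h2
    have e3 : (if (i = 0 ∧ i - 1 = 1) ∨ (i = 1 ∧ i - 1 = 0) then -Phi p i (i - 1)
        else Phi p i (i - 1)) = -1 := by
      by_cases hi : i = 1
      · rw [if_pos (Or.inr ⟨hi, by rw [hi, sub_self]⟩), Phi_pred hp, hi, sub_self, sg_zero hp]
      · have hd : i - 1 ≠ 0 := by
          intro hc
          exact hi (by rw [← sub_add_cancel i 1, hc, zero_add])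
        rw [if_neg, Phi_pred hp, sg_ne_zero hp hd]
        rintro (⟨h1, h2⟩ | ⟨h1, _⟩)
        · rw [h1] at h2
          have : (0 : Fin p) = 1 + 1 := by
            rw [← sub_add_cancel (0 : Fin p) 1, h2]
          exact myTwoNeZero hp this.symm
        · exact hi h1
    rw [e1, e2, e3]
    ring
  · intro j hja hjb hjc
    beta_reduce
    rw [Phi_other hp hja hjb hjc]
    simp

end cyc

theorem stmt9 (p : ℕ) (hp : 4 ≤ p) :
    ∃ Φ : Matrix (Fin p) (Fin p) ℝ, Φ.PosDef ∧
      (∀ i j : Fin p, i ≠ j → ¬ cycAdj p i j → Φ i j = 0) ∧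
      ¬ (Matrix.of fun i j : Fin p =>
          if (i = ⟨0, by omega⟩ ∧ j = ⟨1, by omega⟩) ∨
             (i = ⟨1, by omega⟩ ∧ j = ⟨0, by omega⟩) then -Φ i j else Φ i j).PosDef := by
  haveI : NeZero p := ⟨by omega⟩
  have hv1 : (1 : Fin p).val = 1 := by
    simp [Fin.val_one', Nat.mod_eq_of_lt (show 1 < p by omega)]
  have hvadd : ∀ a : Fin p, (a + 1).val = (a.val + 1) % p := by
    intro a
    rw [Fin.add_def, hv1]
  refine ⟨Phi p, Phi_posDef hp, ?_, ?_⟩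
  · intro i j hij hadj
    rw [cycAdj] at hadj
    push_neg at hadj
    obtain ⟨h1, h2⟩ := hadj
    refine Phi_other hp (Ne.symm hij) ?_ ?_
    · intro hc
      apply h1
      rw [hc, hvadd]
    · intro hc
      apply h2
      have : j + 1 = i := by rw [hc, sub_add_cancel]
      rw [← this, hvadd]
  · intro hPD
    have ez : (⟨0, by omega⟩ : Fin p) = 0 := by
      apply Fin.ext
      simp
    have eo : (⟨1, by omega⟩ : Fin p) = 1 := by
      apply Fin.ext
      exact hv1.symm
    rw [ez, eo] at hPD
    set o : Fin p → ℝ := fun _ => 1 with ho_def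
    have ho : o ≠ 0 := by
      intro hc
      have := congrFun hc 0
      simp [ho_def] at this
    have hpos := hPD.dotProduct_mulVec_pos ho
    have hz : star o ⬝ᵥ ((Matrix.of fun i j : Fin p =>
        if (i = 0 ∧ j = 1) ∨ (i = 1 ∧ j = 0) then -Phi p i j else Phi p i j) *ᵥ o) = 0 := by
      rw [dotProduct]
      have : ∀ i : Fin p, ((Matrix.of fun i j : Fin p =>
          if (i = 0 ∧ j = 1) ∨ (i = 1 ∧ j = 0) then -Phi p i j else Phi p i j) *ᵥ o) i = 0 := by
        intro i
        rw [Matrix.mulVec, dotProduct]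
        have := flip_rowsum hp i
        simpa [ho_def] using this
      simp [this]
    rw [hz] at hpos
    exact lt_irrefl 0 hpos
end

section
/- In an acyclic digraph D = (U,E) with evidence set A ⊆ U, the set Tops_A(1,2) of top nodes of walks from node 1 to node 2 that are d-connecting given A is ancestral in the induced subgraph D_{U∖A}: if v ∈ Tops_A(1,2) and there is a directed path from u to v avoiding A, then u ∈ Tops_A(1,2). -/
open Matrix BigOperators

namespace Stmt10Aux

variable {U : Type}

def lastN (s : U) (L : List (Bool × U × U)) : U := L.foldl (fun _ x => x.2.2) s

lemma lastN_eq_getLast : ∀ (L : List (Bool × U × U)) (s : U) (h : L ≠ []),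
    lastN s L = (L.getLast h).2.2 := by
  intro L
  induction L with
  | nil => intro s h; exact absurd rfl h
  | cons x xs ih =>
    intro s h
    cases xs with
    | nil => simp [lastN]
    | cons y ys =>
      rw [List.getLast_cons (by simp)]
      exact ih x.2.2 (by simp)

def ins (u : U) : U → List (Bool × U × U) → List (Bool × U × U)
  | s0, [] => [(false, s0, u), (true, u, s0)]
  | _, (true, a, c) :: rest => (false, a, u) :: (true, u, a) :: (true, a, c) :: rest
  | _, (false, a, c) :: rest => (false, a, c) :: ins u c rest

lemma ins_spec {E : U → U → Prop} (A : Set U) (u : U) (hu : u ∉ A) :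
    ∀ (L : List (Bool × U × U)) (s0 : U),
    (∀ h : L ≠ [], (L.head h).2.1 = s0) →
    (∀ s ∈ L, (s.1 = true → E s.2.1 s.2.2) ∧ (s.1 = false → E s.2.2 s.2.1)) →
    List.Chain' (fun s t : Bool × U × U => s.2.2 = t.2.1) L →
    List.Chain' (stepPairOK A) L →
    topOf L s0 ∉ A →
    E u (topOf L s0) →
    ins u s0 L ≠ [] ∧
    (∀ h : ins u s0 L ≠ [], ((ins u s0 L).head h).2.1 = s0) ∧
    lastN s0 (ins u s0 L) = lastN s0 L ∧
    (∀ s ∈ ins u s0 L, (s.1 = true → E s.2.1 s.2.2) ∧ (s.1 = false → E s.2.2 s.2.1)) ∧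
    List.Chain' (fun s t : Bool × U × U => s.2.2 = t.2.1) (ins u s0 L) ∧
    List.Chain' (stepPairOK A) (ins u s0 L) ∧
    topOf (ins u s0 L) s0 = u := by
  intro L
  induction L with
  | nil =>
    intro s0 hhead hedge hchain hok htopA hub
    refine ⟨by simp [ins], by simp [ins], by simp [ins, lastN], ?_, ?_, ?_, by simp [ins, topOf]⟩
    · intro s hs
      simp [ins] at hs
      rcases hs with h | h <;> subst h <;> simp <;> exact hub
    · simp [ins, List.Chain', List.isChain_cons_cons]
    · simp only [ins, List.Chain', List.isChain_cons_cons, List.isChain_singleton, and_true]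
      constructor
      · intro h; exact absurd h.1 (by simp)
      · intro _; exact hu
  | cons x rest ih =>
    obtain ⟨d, a, c⟩ := x
    cases d
    · -- first step is backward: recurse
      intro s0 hhead hedge hchain hok htopA hub
      have htop : topOf ((false, a, c) :: rest) s0 = topOf rest c := rfl
      rw [htop] at htopA hub
      have hheadr : ∀ h : rest ≠ [], (rest.head h).2.1 = c := by
        intro h
        have := (List.isChain_cons.mp hchain).1
        have := this (rest.head h) (by rw [List.head?_eq_head h]; rfl)
        exact this.symm
      have hedger : ∀ s ∈ rest, (s.1 = true → E s.2.1 s.2.2) ∧ (s.1 = false → E s.2.2 s.2.1) :=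
        fun s hs => hedge s (List.mem_cons_of_mem _ hs)
      obtain ⟨hne, hhd, hlast, hedg, hchn, hok', htp⟩ :=
        ih c hheadr hedger hchain.tail hok.tail htopA hub
      have hcA : c ∉ A := by
        cases rest with
        | nil => simpa [topOf] using htopA
        | cons y ys =>
          have := (List.isChain_cons_cons.mp hok).1
          exact this.2 (by simp)
      refine ⟨by simp [ins], ?_, ?_, ?_, ?_, ?_, ?_⟩
      · intro h
        show a = s0
        exact hhead (by simp)
      · show lastN s0 ((false, a, c) :: ins u c rest) = lastN s0 ((false, a, c) :: rest)
        show lastN c (ins u c rest) = lastN c rest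
        exact hlast
      · intro s hs
        rw [show ins u s0 ((false, a, c) :: rest) = (false, a, c) :: ins u c rest from rfl] at hs
        rcases List.mem_cons.mp hs with h | h
        · subst h; exact hedge _ (by simp)
        · exact hedg s h
      · show List.IsChain _ ((false, a, c) :: ins u c rest)
        rw [List.isChain_cons]
        refine ⟨?_, hchn⟩
        intro b hb
        rw [List.head?_eq_head hne] at hb
        have := hhd hne
        simp only [Option.mem_def, Option.some.injEq] at hb
        rw [hb] at this
        exact this.symm
      · show List.IsChain (stepPairOK A) ((false, a, c) :: ins u c rest)
        rw [List.isChain_cons]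
        refine ⟨?_, hok'⟩
        intro b _
        constructor
        · intro h; exact absurd h.1 (by simp)
        · intro _; exact hcA
      · show topOf ((false, a, c) :: ins u c rest) s0 = u
        cases rest with
        | nil => simp [ins, topOf]
        | cons y ys =>
          obtain ⟨e, p, q⟩ := y
          cases e <;> simpa [ins, topOf] using htp
    · -- first step is forward: insert here
      intro s0 hhead hedge hchain hok htopA hub
      have htop : topOf ((true, a, c) :: rest) s0 = a := rfl
      rw [htop] at htopA hub
      refine ⟨by simp [ins], ?_, ?_, ?_, ?_, ?_, ?_⟩
      · intro h
        show a = s0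
        exact hhead (by simp)
      · show lastN s0 ((false, a, u) :: (true, u, a) :: (true, a, c) :: rest)
            = lastN s0 ((true, a, c) :: rest)
        simp [lastN]
      · intro s hs
        rw [show ins u s0 ((true, a, c) :: rest)
             = (false, a, u) :: (true, u, a) :: (true, a, c) :: rest from rfl] at hs
        rcases List.mem_cons.mp hs with h | h
        · subst h; exact ⟨by simp, fun _ => hub⟩
        rcases List.mem_cons.mp h with h | h
        · subst h; exact ⟨fun _ => hub, by simp⟩
        · exact hedge s h
      · show List.IsChain _ ((false, a, u) :: (true, u, a) :: (true, a, c) :: rest)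
        rw [List.isChain_cons_cons, List.isChain_cons_cons]
        exact ⟨rfl, rfl, hchain⟩
      · show List.IsChain (stepPairOK A) ((false, a, u) :: (true, u, a) :: (true, a, c) :: rest)
        rw [List.isChain_cons_cons, List.isChain_cons_cons]
        refine ⟨⟨fun h => absurd h.1 (by simp), fun _ => hu⟩,
                ⟨fun h => absurd h.2 (by simp), fun _ => htopA⟩, hok⟩
      · show topOf ((false, a, u) :: (true, u, a) :: (true, a, c) :: rest) s0 = u
        simp [topOf]

lemma step_lemma {E : U → U → Prop} {A : Set U} {n1 n2 : U} {p q : U}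
    (hpq : E p q) (hpA : p ∉ A) (hqA : q ∉ A)
    (hq : q ∈ TopsA E A n1 n2) : p ∈ TopsA E A n1 n2 := by
  obtain ⟨w, hconn, htopw⟩ := hq
  have hhead : ∀ h : w.steps ≠ [], (w.steps.head h).2.1 = n1 := fun _ => w.first_eq
  have htopA : topOf w.steps n1 ∉ A := by
    rw [show topOf w.steps n1 = w.top from rfl, htopw]; exact hqA
  have hub : E p (topOf w.steps n1) := by
    rw [show topOf w.steps n1 = w.top from rfl, htopw]; exact hpq
  obtain ⟨hne, hhd, hlast, hedg, hchn, hok', htp⟩ :=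
    ins_spec A p hpA w.steps n1 hhead w.edge w.chain hconn htopA hub
  refine ⟨⟨ins p n1 w.steps, hne, hhd hne, ?_, hedg, hchn⟩, hok', htp⟩
  rw [← lastN_eq_getLast _ _ hne, hlast, lastN_eq_getLast _ _ w.ne]
  exact w.last_eq

end Stmt10Aux


theorem stmt10 {U : Type} (E : U → U → Prop) (hE : Acyclic E) (A : Set U)
    (n1 n2 : U) (h1 : n1 ∉ A) (h2 : n2 ∉ A) (h12 : n1 ≠ n2)
    (u v : U) (hv : v ∈ TopsA E A n1 n2)
    (hpath : Relation.ReflTransGen (fun a b => E a b ∧ a ∉ A ∧ b ∉ A) u v) :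
    u ∈ TopsA E A n1 n2 := by
  open Stmt10Aux in
  induction hpath using Relation.ReflTransGen.head_induction_on with
  | refl => exact hv
  | head hstep _ ihtail => exact step_lemma hstep.1 hstep.2.1 hstep.2.2 ihtail
end
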